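/- (Proposition 1, finite-state form.) For every time-dependent transition kernel κ : ℕ → X → PMF X, every x ∈ X and every t ≤ H, the safe probability Ψ_κ(x, t) equals the probability, under the trajectory distribution of the absorbing modification κ̃ started at x at time t, that the terminal state X_H lies in C. Equivalently, the expected total reward of the time-augmented absorbing chain with reward r = 1{remaining time = 0} · 1{state ∈ C}, started at x with remaining time k = H - t, equals the long-term safe probability Ψ_κ(x, H - k). -/

import Mathlib

open scoped BigOperators

/-- Trajectory distribution of the time-dependent kernel `κ` started at state `x` at time `t`,
run for `n` further steps: a PMF on functions `Fin (n+1) → X` recording `X_t, ..., X_{t+n}`,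
with `X_t = x` and `X_{s+1} ~ κ s (X_s)` sampled via iterated `PMF.bind`. -/
noncomputable def traj {X : Type*} (κ : ℕ → X → PMF X) : ℕ → (n : ℕ) → X → PMF (Fin (n + 1) → X)
  | _, 0, x => PMF.pure fun _ => x
  | t, n + 1, x => (κ t x).bind fun x' => (traj κ (t + 1) n x').map (Fin.cons x)

/-- Safe probability `Ψ_κ(x, t)`: the probability, under the trajectory distribution of `κ`
started at `x` at time `t` over horizon `H`, that every state of the trajectory lies in the
safe set `C`. -/
noncomputable def safeProb {X : Type*} [Fintype X] [DecidableEq X]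
    (C : Set X) [DecidablePred (· ∈ C)] (κ : ℕ → X → PMF X) (H t : ℕ) (x : X) : ℝ :=
  ∑ f : Fin (H - t + 1) → X,
    if ∀ i : Fin (H - t + 1), f i ∈ C then ((traj κ t (H - t) x) f).toReal else 0

/-- **Proposition 1 (finite-state form).** The long-term safe probability `Ψ_κ(x, t)` equals the
probability, under the trajectory distribution of the absorbing modification `κ̃` of `κ`
(`κ̃ s y = κ s y` for `y ∈ C`, `κ̃ s y = PMF.pure y` otherwise) started at `x` at time `t`, that
the terminal state `X_H` lies in `C` — i.e. the expected terminal reward `1{X_H ∈ C}` of the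
auxiliary absorbing chain equals the long-term safe probability of the original chain. -/
lemma traj_succ_apply {X : Type*} [DecidableEq X] (κ : ℕ → X → PMF X) (t n : ℕ) (x x0 : X)
    (g : Fin (n + 1) → X) :
    traj κ t (n + 1) x (Fin.cons x0 g) =
      if x0 = x then ∑' x', κ t x x' * traj κ (t + 1) n x' g else 0 := by
  rw [traj, PMF.bind_apply]
  by_cases h : x0 = x
  · subst h
    simp only [if_pos rfl]
    congr 1
    ext x'
    congr 1
    rw [PMF.map_apply, tsum_eq_single g]
    · simp
    · intro b hb
      rw [if_neg]
      rw [Fin.cons_inj]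
      rintro ⟨-, h2⟩
      exact hb h2.symm
  · simp only [if_neg h]
    rw [ENNReal.tsum_eq_zero]
    intro x'
    rw [PMF.map_apply]
    convert mul_zero _
    rw [ENNReal.tsum_eq_zero]
    intro b
    rw [if_neg]
    rw [Fin.cons_inj]
    rintro ⟨h1, -⟩
    exact h h1

lemma traj_absorbing_out {X : Type*} (C : Set X) [DecidablePred (· ∈ C)]
    (κ : ℕ → X → PMF X) (n : ℕ) :
    ∀ t : ℕ, ∀ x : X, x ∉ C →
      traj (fun s y => if y ∈ C then κ s y else PMF.pure y) t n x = PMF.pure fun _ => x := by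
  induction n with
  | zero => intro t x _; rfl
  | succ n ih =>
      intro t x hx
      rw [traj]
      simp only [if_neg hx]
      rw [PMF.pure_bind, ih (t + 1) x hx, PMF.pure_map]
      congr 1
      ext i
      refine Fin.cases ?_ ?_ i <;> simp

lemma sum_ite_pure {Y : Type*} [Fintype Y] [DecidableEq Y]
    (P : Y → Prop) [DecidablePred P] (c : Y) :
    (∑ f : Y, if P f then (PMF.pure c) f else 0) = if P c then 1 else 0 := by
  calc (∑ f : Y, if P f then (PMF.pure c) f else 0)
      = ∑ f : Y, if f = c then (if P f then (1 : ENNReal) else 0) else 0 := by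
        refine Finset.sum_congr rfl fun f _ => ?_
        rw [PMF.pure_apply]
        by_cases h : P f <;> by_cases h' : f = c <;> simp [h, h']
    _ = if P c then 1 else 0 := by
        rw [Finset.sum_ite_eq' Finset.univ c (fun f => if P f then (1 : ENNReal) else 0)]
        simp

lemma swap_sum {Y Z : Type*} [Fintype Y] [Fintype Z]
    (P : Z → Prop) [DecidablePred P] (a : Y → ENNReal) (b : Y → Z → ENNReal) :
    (∑ g : Z, if P g then ∑ x' : Y, a x' * b x' g else 0)
      = ∑ x' : Y, a x' * ∑ g : Z, if P g then b x' g else 0 := by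
  calc (∑ g : Z, if P g then ∑ x' : Y, a x' * b x' g else 0)
      = ∑ g : Z, ∑ x' : Y, if P g then a x' * b x' g else 0 := by
        refine Finset.sum_congr rfl fun g _ => ?_
        split <;> simp
    _ = ∑ x' : Y, ∑ g : Z, if P g then a x' * b x' g else 0 := Finset.sum_comm
    _ = _ := by
        refine Finset.sum_congr rfl fun x' _ => ?_
        rw [Finset.mul_sum]
        refine Finset.sum_congr rfl fun g _ => ?_
        split <;> simp

lemma key_sum {X : Type*} [Fintype X] [DecidableEq X]
    (C : Set X) [DecidablePred (· ∈ C)] (κ : ℕ → X → PMF X) (n : ℕ) :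
    ∀ t : ℕ, ∀ x : X,
    (∑ f : Fin (n + 1) → X, if ∀ i, f i ∈ C then traj κ t n x f else 0)
      = ∑ f : Fin (n + 1) → X,
          if f (Fin.last n) ∈ C then
            traj (fun s y => if y ∈ C then κ s y else PMF.pure y) t n x f else 0 := by
  induction n with
  | zero =>
      intro t x
      rw [show traj κ t 0 x = PMF.pure fun _ => x from rfl,
          show traj (fun s y => if y ∈ C then κ s y else PMF.pure y) t 0 x
            = PMF.pure fun _ => x from rfl,
          sum_ite_pure, sum_ite_pure]
      congr 1
      simp [Fin.forall_fin_one]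
  | succ n ih =>
      intro t x
      have reindex : ∀ (G : (Fin (n + 2) → X) → ENNReal),
          (∑ f : Fin (n + 2) → X, G f) = ∑ x0 : X, ∑ g : Fin (n + 1) → X, G (Fin.cons x0 g) := by
        intro G
        rw [← Equiv.sum_comp (Fin.consEquiv fun _ => X) G, Fintype.sum_prod_type]
        rfl
      have collapse : ∀ (κ' : ℕ → X → PMF X) (P : (Fin (n + 2) → X) → Prop) [DecidablePred P],
          (∑ f : Fin (n + 2) → X, if P f then traj κ' t (n + 1) x f else 0)
            = ∑ g : Fin (n + 1) → X,
                if P (Fin.cons x g) then ∑ x' : X, κ' t x x' * traj κ' (t + 1) n x' g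
                else 0 := by
        intro κ' P _
        rw [reindex]
        rw [Finset.sum_eq_single x]
        · refine Finset.sum_congr rfl fun g _ => ?_
          rw [traj_succ_apply, if_pos rfl, tsum_fintype]
        · intro x0 _ hx0
          refine Finset.sum_eq_zero fun g _ => ?_
          rw [traj_succ_apply, if_neg hx0, ite_self]
        · intro h; exact absurd (Finset.mem_univ x) h
      rw [collapse κ _, collapse (fun s y => if y ∈ C then κ s y else PMF.pure y) _]
      have hcond1 : ∀ g : Fin (n + 1) → X,
          (∀ i, (Fin.cons x g : Fin (n + 2) → X) i ∈ C) ↔ (x ∈ C ∧ ∀ i, g i ∈ C) := by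
        intro g
        simp [Fin.forall_fin_succ]
      have hcond2 : ∀ g : Fin (n + 1) → X,
          (Fin.cons x g : Fin (n + 2) → X) (Fin.last (n + 1)) = g (Fin.last n) := by
        intro g
        rw [← Fin.succ_last, Fin.cons_succ]
      by_cases hx : x ∈ C
      · calc (∑ g : Fin (n + 1) → X,
            if ∀ i, (Fin.cons x g : Fin (n + 2) → X) i ∈ C then
              ∑ x' : X, κ t x x' * traj κ (t + 1) n x' g else 0)
            = ∑ g : Fin (n + 1) → X,
                if ∀ i, g i ∈ C then ∑ x' : X, κ t x x' * traj κ (t + 1) n x' g else 0 := by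
              refine Finset.sum_congr rfl fun g _ => ?_
              refine if_congr ?_ rfl rfl
              rw [hcond1 g]
              exact and_iff_right hx
          _ = ∑ x' : X, κ t x x' *
                ∑ g : Fin (n + 1) → X, if ∀ i, g i ∈ C then traj κ (t + 1) n x' g else 0 :=
              swap_sum _ _ _
          _ = ∑ x' : X, (if x ∈ C then κ t x else PMF.pure x) x' *
                ∑ g : Fin (n + 1) → X,
                  if g (Fin.last n) ∈ C then
                    traj (fun s y => if y ∈ C then κ s y else PMF.pure y) (t + 1) n x' g
                  else 0 := by
              refine Finset.sum_congr rfl fun x' _ => ?_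
              rw [ih (t + 1) x', if_pos hx]
          _ = ∑ g : Fin (n + 1) → X,
                if g (Fin.last n) ∈ C then
                  ∑ x' : X, (fun s y => if y ∈ C then κ s y else PMF.pure y) t x x' *
                    traj (fun s y => if y ∈ C then κ s y else PMF.pure y) (t + 1) n x' g
                else 0 := (swap_sum _ _ _).symm
          _ = ∑ g : Fin (n + 1) → X,
                if (Fin.cons x g : Fin (n + 2) → X) (Fin.last (n + 1)) ∈ C then
                  ∑ x' : X, (fun s y => if y ∈ C then κ s y else PMF.pure y) t x x' *
                    traj (fun s y => if y ∈ C then κ s y else PMF.pure y) (t + 1) n x' g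
                else 0 := by
              refine Finset.sum_congr rfl fun g _ => ?_
              rw [hcond2 g]
      · calc (∑ g : Fin (n + 1) → X,
            if ∀ i, (Fin.cons x g : Fin (n + 2) → X) i ∈ C then
              ∑ x' : X, κ t x x' * traj κ (t + 1) n x' g else 0)
            = 0 := by
              refine Finset.sum_eq_zero fun g _ => ?_
              rw [if_neg]
              rw [hcond1 g]
              exact fun h => hx h.1
          _ = ∑ g : Fin (n + 1) → X,
                if (Fin.cons x g : Fin (n + 2) → X) (Fin.last (n + 1)) ∈ C then
                  ∑ x' : X, (fun s y => if y ∈ C then κ s y else PMF.pure y) t x x' *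
                    traj (fun s y => if y ∈ C then κ s y else PMF.pure y) (t + 1) n x' g
                else 0 := by
              symm
              calc (∑ g : Fin (n + 1) → X,
                  if (Fin.cons x g : Fin (n + 2) → X) (Fin.last (n + 1)) ∈ C then
                    ∑ x' : X, (fun s y => if y ∈ C then κ s y else PMF.pure y) t x x' *
                      traj (fun s y => if y ∈ C then κ s y else PMF.pure y) (t + 1) n x' g
                  else 0)
                  = ∑ g : Fin (n + 1) → X,
                      if g (Fin.last n) ∈ C then
                        ∑ x' : X, (fun s y => if y ∈ C then κ s y else PMF.pure y) t x x' *
                          traj (fun s y => if y ∈ C then κ s y else PMF.pure y) (t + 1) n x' g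
                      else 0 := by
                    refine Finset.sum_congr rfl fun g _ => ?_
                    rw [hcond2 g]
                _ = ∑ x' : X, (fun s y => if y ∈ C then κ s y else PMF.pure y) t x x' *
                      ∑ g : Fin (n + 1) → X,
                        if g (Fin.last n) ∈ C then
                          traj (fun s y => if y ∈ C then κ s y else PMF.pure y) (t + 1) n x' g
                        else 0 := swap_sum _ _ _
                _ = 0 := by
                    refine Finset.sum_eq_zero fun x' _ => ?_
                    by_cases hx' : x' = x
                    · rw [hx', traj_absorbing_out C κ n (t + 1) x hx]
                      rw [sum_ite_pure, if_neg hx, mul_zero]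
                    · have : (fun s y => if y ∈ C then κ s y else PMF.pure y) t x x' = 0 := by
                        simp only [if_neg hx]
                        rw [PMF.pure_apply, if_neg hx']
                      rw [this, zero_mul]

theorem safeProb_eq_terminal_absorbing
    {X : Type*} [Fintype X] [Nonempty X] [DecidableEq X]
    (C : Set X) [DecidablePred (· ∈ C)] (H : ℕ)
    (κ : ℕ → X → PMF X) (x : X) (t : ℕ) (ht : t ≤ H) :
    safeProb C κ H t x
      = ∑ f : Fin (H - t + 1) → X,
          if f (Fin.last (H - t)) ∈ C then
            ((traj (fun s y => if y ∈ C then κ s y else PMF.pure y) t (H - t) x) f).toReal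
          else 0 := by
  have conv : ∀ (p : PMF (Fin (H - t + 1) → X)) (P : (Fin (H - t + 1) → X) → Prop)
      [DecidablePred P],
      (∑ f : Fin (H - t + 1) → X, if P f then (p f).toReal else 0)
        = (∑ f : Fin (H - t + 1) → X, if P f then p f else 0).toReal := by
    intro p P _
    rw [ENNReal.toReal_sum (fun f _ => ?_)]
    · refine Finset.sum_congr rfl fun f _ => ?_
      split <;> simp
    · split
      · exact PMF.apply_ne_top p f
      · simp
  rw [safeProb, conv, conv, key_sum C κ (H - t) t x]
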